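/- Let m ∈ ℝ, let (δ_j)_{j≥1} be a strictly increasing sequence of positive reals with δ_j → ∞, and let (a_j)_{j≥1} be positive reals with Σ_j a_j²/δ_j < ∞. For ν ∈ (0,∞) with ν ∉ {δ_j} define λ(ν) = m − Σ_{j≥1} ν·a_j²/(ν − δ_j) (the series converges absolutely). Then for every j ≥ 1: λ is strictly increasing on the interval (δ_j, δ_{j+1}); λ(ν) → −∞ as ν → δ_j⁺ and λ(ν) → +∞ as ν → δ_{j+1}⁻; consequently λ has exactly one zero ν_j in (δ_j, δ_{j+1}). In particular the zeros and poles interlace: ν_{j−1} < δ_j < ν_j for every j ≥ 2. -/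

import Mathlib

open Filter Set

private lemma emri_term_lt {a2 d x y : ℝ} (ha : 0 < a2) (hd : 0 < d) (hxy : x < y)
    (hcase : d < x ∨ y < d) : y * a2 / (y - d) < x * a2 / (x - d) := by
  have hprod : 0 < (x - d) * (y - d) := by
    rcases hcase with h | h
    · exact mul_pos (by linarith) (by linarith)
    · exact mul_pos_of_neg_of_neg (by linarith) (by linarith)
  have hx : x - d ≠ 0 := left_ne_zero_of_mul hprod.ne'
  have hy : y - d ≠ 0 := right_ne_zero_of_mul hprod.ne'
  have key : x * a2 / (x - d) - y * a2 / (y - d) = a2 * d * (y - x) / ((x - d) * (y - d)) := by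
    field_simp
    ring
  have hpos : 0 < a2 * d * (y - x) / ((x - d) * (y - d)) :=
    div_pos (mul_pos (mul_pos ha hd) (by linarith)) hprod
  linarith

private lemma emri_summable_point (δ a : ℕ → ℝ)
    (hδtop : Filter.Tendsto δ Filter.atTop Filter.atTop)
    (hsum : Summable (fun j => a j ^ 2 / δ j)) {ν : ℝ} (hν : 0 < ν) :
    Summable fun i => |ν * a i ^ 2 / (ν - δ i)| := by
  obtain ⟨N, hN⟩ := eventually_atTop.1 (hδtop.eventually_ge_atTop (2 * ν))
  rw [← summable_nat_add_iff N]
  apply Summable.of_nonneg_of_le (fun i => abs_nonneg _) _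
    (((summable_nat_add_iff N).2 hsum).mul_left (2 * ν))
  intro i
  have hk : 2 * ν ≤ δ (i + N) := hN _ (Nat.le_add_left N i)
  have hδk : 0 < δ (i + N) := by linarith
  have h1 : 0 < δ (i + N) - ν := by linarith
  rw [abs_div, abs_of_nonneg (by positivity : (0:ℝ) ≤ ν * a (i + N) ^ 2),
    abs_of_neg (by linarith : ν - δ (i + N) < 0), neg_sub]
  have h2 : 2 * ν * (a (i + N) ^ 2 / δ (i + N)) = 2 * ν * a (i + N) ^ 2 / δ (i + N) := by ring
  rw [h2, div_le_div_iff₀ h1 hδk]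
  nlinarith [mul_nonneg (mul_nonneg hν.le (sq_nonneg (a (i + N))))
    (by linarith : (0:ℝ) ≤ δ (i + N) - 2 * ν)]

private lemma emri_unif (δ a : ℕ → ℝ) (hδmono : StrictMono δ) (hδpos : ∀ j, 0 < δ j)
    (hδtop : Filter.Tendsto δ Filter.atTop Filter.atTop)
    (hsum : Summable (fun j => a j ^ 2 / δ j))
    {j : ℕ} {α β : ℝ} (hα : δ j < α) (hβ : β < δ (j + 1)) (hαβ : α ≤ β) :
    ∃ u : ℕ → ℝ, Summable u ∧ ∀ i, ∀ ν ∈ Icc α β, |ν * a i ^ 2 / (ν - δ i)| ≤ u i := by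
  have hα0 : 0 < α := (hδpos j).trans hα
  have hβ0 : 0 < β := lt_of_lt_of_le hα0 hαβ
  obtain ⟨N, hN⟩ := eventually_atTop.1 (hδtop.eventually_ge_atTop (2 * β))
  set ε : ℝ := min (α - δ j) (δ (j + 1) - β) with hεdef
  have hε0 : 0 < ε := lt_min (by linarith) (by linarith)
  refine ⟨fun i => if i < N then β * a i ^ 2 / ε else 2 * β * (a i ^ 2 / δ i), ?_, ?_⟩
  · rw [← summable_nat_add_iff N]
    apply Summable.congr (((summable_nat_add_iff N).2 hsum).mul_left (2 * β))
    intro i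
    simp [Nat.not_lt.2 (Nat.le_add_left N i)]
  · intro i ν hν
    obtain ⟨hν1, hν2⟩ := hν
    have hν0 : 0 < ν := hα0.trans_le hν1
    by_cases hiN : i < N
    · simp only [if_pos hiN]
      have hdist : ε ≤ |ν - δ i| := by
        rcases le_or_gt i j with hij | hij
        · have hd : δ i ≤ δ j := hδmono.monotone hij
          rw [abs_of_pos (by linarith)]
          calc ε ≤ α - δ j := min_le_left _ _
            _ ≤ ν - δ i := by linarith
        · have hd : δ (j + 1) ≤ δ i := hδmono.monotone hij
          rw [abs_of_neg (by linarith : ν - δ i < 0), neg_sub]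
          calc ε ≤ δ (j + 1) - β := min_le_right _ _
            _ ≤ δ i - ν := by linarith
      rw [abs_div, abs_of_nonneg (by positivity : (0:ℝ) ≤ ν * a i ^ 2)]
      exact div_le_div₀ (by positivity) (by nlinarith [sq_nonneg (a i)]) hε0 hdist
    · simp only [if_neg hiN]
      have hk : 2 * β ≤ δ i := hN i (Nat.le_of_not_lt hiN)
      have h1 : 0 < δ i - ν := by linarith
      rw [abs_div, abs_of_nonneg (by positivity : (0:ℝ) ≤ ν * a i ^ 2),
        abs_of_neg (by linarith : ν - δ i < 0), neg_sub]
      have h2 : 2 * β * (a i ^ 2 / δ i) = 2 * β * a i ^ 2 / δ i := by ring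
      rw [h2, div_le_div_iff₀ h1 (by linarith : (0:ℝ) < δ i)]
      have key : ν * δ i ≤ 2 * β * (δ i - ν) := by
        nlinarith [mul_nonneg (by linarith : (0:ℝ) ≤ 2 * β - ν)
          (by linarith : (0:ℝ) ≤ δ i - 2 * β), mul_nonneg hβ0.le (by linarith : (0:ℝ) ≤ β - ν)]
      nlinarith [mul_le_mul_of_nonneg_right key (sq_nonneg (a i))]

private lemma emri_cont (m : ℝ) (δ a : ℕ → ℝ) (hδmono : StrictMono δ) (hδpos : ∀ j, 0 < δ j)
    (hδtop : Filter.Tendsto δ Filter.atTop Filter.atTop)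
    (hsum : Summable (fun j => a j ^ 2 / δ j))
    {j : ℕ} {α β : ℝ} (hα : δ j < α) (hβ : β < δ (j + 1)) (hαβ : α ≤ β) :
    ContinuousOn (fun ν : ℝ => m - ∑' i : ℕ, ν * a i ^ 2 / (ν - δ i)) (Icc α β) := by
  obtain ⟨u, hu, hb⟩ := emri_unif δ a hδmono hδpos hδtop hsum hα hβ hαβ
  have huni := tendstoUniformlyOn_tsum hu
    (fun n x hx => by rw [Real.norm_eq_abs]; exact hb n x hx)
  have hterm : ∀ i : ℕ, ContinuousOn (fun ν : ℝ => ν * a i ^ 2 / (ν - δ i)) (Icc α β) := by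
    intro i
    apply ContinuousOn.div ((continuous_id.mul continuous_const).continuousOn)
      ((continuous_id.sub continuous_const).continuousOn)
    intro x hx
    rcases le_or_gt i j with hij | hij
    · have h1 : δ i ≤ δ j := hδmono.monotone hij
      exact sub_ne_zero.2 (show δ i < x by linarith [hx.1]).ne'
    · have h1 : δ (j + 1) ≤ δ i := hδmono.monotone hij
      exact sub_ne_zero.2 (show x < δ i by linarith [hx.2]).ne
  have hcont : ContinuousOn (fun ν : ℝ => ∑' i : ℕ, ν * a i ^ 2 / (ν - δ i)) (Icc α β) :=
    huni.continuousOn (Eventually.of_forall fun t =>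
      continuousOn_finset_sum t (fun i _ => hterm i)).frequently
  exact continuousOn_const.sub hcont

private lemma emri_term_mono (δ a : ℕ → ℝ) (hδmono : StrictMono δ) (hδpos : ∀ j, 0 < δ j)
    (hapos : ∀ j, 0 < a j) {j : ℕ} {x y : ℝ}
    (hx : x ∈ Ioo (δ j) (δ (j + 1))) (hy : y ∈ Ioo (δ j) (δ (j + 1))) (hxy : x < y) (i : ℕ) :
    y * a i ^ 2 / (y - δ i) < x * a i ^ 2 / (x - δ i) := by
  apply emri_term_lt (pow_pos (hapos i) 2) (hδpos i) hxy
  rcases le_or_gt i j with h | h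
  · exact Or.inl (lt_of_le_of_lt (hδmono.monotone h) hx.1)
  · exact Or.inr (lt_of_lt_of_le hy.2 (hδmono.monotone h))

/-- Theorem 10.5, analytic core: for
`λ(ν) = m − Σ_j ν·a_j²/(ν − δ_j)` with `δ_j` strictly increasing positive tending
to `∞` and `Σ a_j²/δ_j < ∞`: the series converges absolutely off the poles, `λ` is
strictly increasing on each `(δ_j, δ_{j+1})` with limits `−∞` and `+∞` at the
endpoints, has exactly one zero `ν_j` there, and the zeros interlace the poles. -/
theorem effective_mass_root_interlacing
    (m : ℝ) (δ a : ℕ → ℝ)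
    (hδmono : StrictMono δ) (hδpos : ∀ j, 0 < δ j)
    (hδtop : Filter.Tendsto δ Filter.atTop Filter.atTop)
    (hapos : ∀ j, 0 < a j)
    (hsum : Summable (fun j => a j ^ 2 / δ j)) :
    (∀ ν : ℝ, 0 < ν → ν ∉ Set.range δ →
        Summable (fun j => |ν * a j ^ 2 / (ν - δ j)|)) ∧
    (∀ j : ℕ,
      StrictMonoOn (fun ν : ℝ => m - ∑' i : ℕ, ν * a i ^ 2 / (ν - δ i))
        (Set.Ioo (δ j) (δ (j + 1))) ∧
      Filter.Tendsto (fun ν : ℝ => m - ∑' i : ℕ, ν * a i ^ 2 / (ν - δ i))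
        (nhdsWithin (δ j) (Set.Ioo (δ j) (δ (j + 1)))) Filter.atBot ∧
      Filter.Tendsto (fun ν : ℝ => m - ∑' i : ℕ, ν * a i ^ 2 / (ν - δ i))
        (nhdsWithin (δ (j + 1)) (Set.Ioo (δ j) (δ (j + 1)))) Filter.atTop ∧
      (∃! ν : ℝ, ν ∈ Set.Ioo (δ j) (δ (j + 1)) ∧
        m - ∑' i : ℕ, ν * a i ^ 2 / (ν - δ i) = 0)) ∧
    (∀ ν : ℕ → ℝ,
      (∀ j, ν j ∈ Set.Ioo (δ j) (δ (j + 1)) ∧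
        m - ∑' i : ℕ, ν j * a i ^ 2 / (ν j - δ i) = 0) →
      ∀ j : ℕ, 1 ≤ j → ν (j - 1) < δ j ∧ δ j < ν j) := by
  have hsum_abs : ∀ {ν : ℝ}, 0 < ν → Summable fun i => |ν * a i ^ 2 / (ν - δ i)| :=
    fun hν => emri_summable_point δ a hδtop hsum hν
  have hsum_pt : ∀ {ν : ℝ}, 0 < ν → Summable fun i => ν * a i ^ 2 / (ν - δ i) :=
    fun hν => (hsum_abs hν).of_abs
  refine ⟨fun ν hν _ => hsum_abs hν, ?_, ?_⟩
  · intro j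
    have hjj : δ j < δ (j + 1) := hδmono (Nat.lt_succ_self j)
    have hIpos : ∀ {x : ℝ}, x ∈ Ioo (δ j) (δ (j + 1)) → 0 < x :=
      fun hx => (hδpos j).trans hx.1
    -- strict monotonicity
    have hmono : StrictMonoOn (fun ν : ℝ => m - ∑' i : ℕ, ν * a i ^ 2 / (ν - δ i))
        (Ioo (δ j) (δ (j + 1))) := by
      intro x hx y hy hxy
      have hlt : ∑' i : ℕ, y * a i ^ 2 / (y - δ i) < ∑' i : ℕ, x * a i ^ 2 / (x - δ i) :=
        Summable.tsum_lt_tsum (fun i => (emri_term_mono δ a hδmono hδpos hapos hx hy hxy i).le)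
          (emri_term_mono δ a hδmono hδpos hapos hx hy hxy 0)
          (hsum_pt (hIpos hy)) (hsum_pt (hIpos hx))
      simp only []
      linarith
    -- summability of series with one index removed
    have hgsum : ∀ (k : ℕ) {ν : ℝ}, 0 < ν →
        Summable fun i => if i = k then 0 else ν * a i ^ 2 / (ν - δ i) := by
      intro k ν hν
      apply Summable.of_abs
      apply Summable.of_nonneg_of_le (fun i => abs_nonneg _) _ (hsum_abs hν)
      intro i
      by_cases h : i = k
      · simp [h]
      · simp [h]
    -- splitting
    have hsplit : ∀ (k : ℕ) {ν : ℝ}, 0 < ν →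
        m - ∑' i : ℕ, ν * a i ^ 2 / (ν - δ i) =
          m - ν * a k ^ 2 / (ν - δ k) -
            ∑' i : ℕ, if i = k then 0 else ν * a i ^ 2 / (ν - δ i) := by
      intro k ν hν
      rw [Summable.tsum_eq_add_tsum_ite (hsum_pt hν) k]
      ring
    -- monotonicity of the reduced sum
    have hGle : ∀ (k : ℕ) {x y : ℝ}, x ∈ Ioo (δ j) (δ (j + 1)) → y ∈ Ioo (δ j) (δ (j + 1)) →
        x ≤ y → (∑' i : ℕ, if i = k then 0 else y * a i ^ 2 / (y - δ i)) ≤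
          ∑' i : ℕ, if i = k then 0 else x * a i ^ 2 / (x - δ i) := by
      intro k x y hx hy hxy
      rcases eq_or_lt_of_le hxy with rfl | hlt
      · exact le_refl _
      · apply Summable.tsum_le_tsum _ (hgsum k (hIpos hy)) (hgsum k (hIpos hx))
        intro i
        by_cases h : i = k
        · simp [h]
        · simp only [if_neg h]
          exact (emri_term_mono δ a hδmono hδpos hapos hx hy hlt i).le
    set c : ℝ := (δ j + δ (j + 1)) / 2 with hcdef
    have hc1 : δ j < c := by simp only [hcdef]; linarith
    have hc2 : c < δ (j + 1) := by simp only [hcdef]; linarith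
    have hcIoo : c ∈ Ioo (δ j) (δ (j + 1)) := ⟨hc1, hc2⟩
    -- limit atBot at δ j
    have hBot : Filter.Tendsto (fun ν : ℝ => m - ∑' i : ℕ, ν * a i ^ 2 / (ν - δ i))
        (nhdsWithin (δ j) (Ioo (δ j) (δ (j + 1)))) atBot := by
      set C : ℝ := ∑' i : ℕ, if i = j then 0 else c * a i ^ 2 / (c - δ i) with hCdef
      have hterm : Tendsto (fun ν : ℝ => ν * a j ^ 2 / (ν - δ j))
          (nhdsWithin (δ j) (Ioo (δ j) (δ (j + 1)))) atTop := by
        have h1 : Tendsto (fun ν : ℝ => ν * a j ^ 2)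
            (nhdsWithin (δ j) (Ioo (δ j) (δ (j + 1)))) (nhds (δ j * a j ^ 2)) :=
          ((continuous_id.mul continuous_const).tendsto (δ j)).mono_left nhdsWithin_le_nhds
        have h2 : Tendsto (fun ν : ℝ => (ν - δ j)⁻¹)
            (nhdsWithin (δ j) (Ioo (δ j) (δ (j + 1)))) atTop := by
          apply tendsto_inv_nhdsGT_zero.comp
          apply tendsto_nhdsWithin_of_tendsto_nhds_of_eventually_within
          · have h3 := ((continuous_id.sub
                (continuous_const : Continuous fun _ : ℝ => δ j)).tendsto (δ j))
            simp only [Pi.sub_apply, id_eq, sub_self] at h3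
            exact h3.mono_left nhdsWithin_le_nhds
          · filter_upwards [self_mem_nhdsWithin] with ν hν
            exact sub_pos.2 hν.1
        have := (Tendsto.pos_mul_atTop (mul_pos (hδpos j) (pow_pos (hapos j) 2)) h1 h2)
        exact this.congr fun ν => (div_eq_mul_inv _ _).symm
      have hbound : Tendsto (fun ν : ℝ => m - ν * a j ^ 2 / (ν - δ j) - C)
          (nhdsWithin (δ j) (Ioo (δ j) (δ (j + 1)))) atBot := by
        have h2 : Tendsto (fun ν : ℝ => -(ν * a j ^ 2 / (ν - δ j)))
            (nhdsWithin (δ j) (Ioo (δ j) (δ (j + 1)))) atBot :=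
          tendsto_neg_atTop_atBot.comp hterm
        have h3 := tendsto_atBot_add_const_right
          (nhdsWithin (δ j) (Ioo (δ j) (δ (j + 1)))) (m - C) h2
        exact h3.congr fun ν => by ring
      apply tendsto_atBot_mono' _ _ hbound
      filter_upwards [self_mem_nhdsWithin,
        nhdsWithin_le_nhds (Iio_mem_nhds hc1)] with ν hν hνc
      rw [hsplit j (hIpos hν)]
      have hle : C ≤ ∑' i : ℕ, if i = j then 0 else ν * a i ^ 2 / (ν - δ i) :=
        hGle j hν hcIoo (le_of_lt hνc)
      linarith
    -- limit atTop at δ (j+1)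
    have hTop : Filter.Tendsto (fun ν : ℝ => m - ∑' i : ℕ, ν * a i ^ 2 / (ν - δ i))
        (nhdsWithin (δ (j + 1)) (Ioo (δ j) (δ (j + 1)))) atTop := by
      set C' : ℝ := ∑' i : ℕ, if i = j + 1 then 0 else c * a i ^ 2 / (c - δ i) with hC'def
      have hterm : Tendsto (fun ν : ℝ => ν * a (j + 1) ^ 2 / (ν - δ (j + 1)))
          (nhdsWithin (δ (j + 1)) (Ioo (δ j) (δ (j + 1)))) atBot := by
        have h1 : Tendsto (fun ν : ℝ => ν * a (j + 1) ^ 2)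
            (nhdsWithin (δ (j + 1)) (Ioo (δ j) (δ (j + 1))))
            (nhds (δ (j + 1) * a (j + 1) ^ 2)) :=
          ((continuous_id.mul continuous_const).tendsto (δ (j + 1))).mono_left nhdsWithin_le_nhds
        have h2 : Tendsto (fun ν : ℝ => (δ (j + 1) - ν)⁻¹)
            (nhdsWithin (δ (j + 1)) (Ioo (δ j) (δ (j + 1)))) atTop := by
          apply tendsto_inv_nhdsGT_zero.comp
          apply tendsto_nhdsWithin_of_tendsto_nhds_of_eventually_within
          · have h3 := (((continuous_const : Continuous fun _ : ℝ => δ (j + 1)).sub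
                continuous_id).tendsto (δ (j + 1)))
            simp only [Pi.sub_apply, id_eq, sub_self] at h3
            exact h3.mono_left nhdsWithin_le_nhds
          · filter_upwards [self_mem_nhdsWithin] with ν hν
            exact sub_pos.2 hν.2
        have h4 := Tendsto.pos_mul_atTop (mul_pos (hδpos (j + 1)) (pow_pos (hapos (j + 1)) 2)) h1 h2
        have h5 := tendsto_neg_atTop_atBot.comp h4
        apply h5.congr
        intro ν
        simp only [Function.comp_apply]
        rw [div_eq_mul_inv, show ν - δ (j + 1) = -(δ (j + 1) - ν) by ring, inv_neg, mul_neg]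
      have hbound : Tendsto (fun ν : ℝ => m - ν * a (j + 1) ^ 2 / (ν - δ (j + 1)) - C')
          (nhdsWithin (δ (j + 1)) (Ioo (δ j) (δ (j + 1)))) atTop := by
        have h2 : Tendsto (fun ν : ℝ => -(ν * a (j + 1) ^ 2 / (ν - δ (j + 1))))
            (nhdsWithin (δ (j + 1)) (Ioo (δ j) (δ (j + 1)))) atTop :=
          tendsto_neg_atBot_atTop.comp hterm
        have h3 := tendsto_atTop_add_const_right
          (nhdsWithin (δ (j + 1)) (Ioo (δ j) (δ (j + 1)))) (m - C') h2
        exact h3.congr fun ν => by ring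
      apply tendsto_atTop_mono' _ _ hbound
      filter_upwards [self_mem_nhdsWithin,
        nhdsWithin_le_nhds (Ioi_mem_nhds hc2)] with ν hν hνc
      rw [hsplit (j + 1) (hIpos hν)]
      have hle : (∑' i : ℕ, if i = j + 1 then 0 else ν * a i ^ 2 / (ν - δ i)) ≤ C' :=
        hGle (j + 1) hcIoo hν (le_of_lt hνc)
      linarith
    refine ⟨hmono, hBot, hTop, ?_⟩
    -- existence and uniqueness of the zero
    have hne1 : NeBot (nhdsWithin (δ j) (Ioo (δ j) (δ (j + 1)))) := by
      apply mem_closure_iff_nhdsWithin_neBot.1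
      rw [closure_Ioo hjj.ne]
      exact ⟨le_refl _, hjj.le⟩
    have hne2 : NeBot (nhdsWithin (δ (j + 1)) (Ioo (δ j) (δ (j + 1)))) := by
      apply mem_closure_iff_nhdsWithin_neBot.1
      rw [closure_Ioo hjj.ne]
      exact ⟨hjj.le, le_refl _⟩
    obtain ⟨ν₁, hν₁Ioo, hν₁neg⟩ :
        ∃ ν₁, ν₁ ∈ Ioo (δ j) (δ (j + 1)) ∧
          m - ∑' i : ℕ, ν₁ * a i ^ 2 / (ν₁ - δ i) < 0 := by
      have h := (eventually_mem_nhdsWithin.and (hBot.eventually (eventually_lt_atBot 0))).exists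
      exact ⟨h.choose, h.choose_spec.1, h.choose_spec.2⟩
    obtain ⟨ν₂, hν₂Ioo, hν₂pos⟩ :
        ∃ ν₂, ν₂ ∈ Ioo (δ j) (δ (j + 1)) ∧
          0 < m - ∑' i : ℕ, ν₂ * a i ^ 2 / (ν₂ - δ i) := by
      have h := (eventually_mem_nhdsWithin.and (hTop.eventually (eventually_gt_atTop 0))).exists
      exact ⟨h.choose, h.choose_spec.1, h.choose_spec.2⟩
    have hlt : ν₁ < ν₂ := by
      rcases lt_trichotomy ν₁ ν₂ with h | h | h
      · exact h
      · exfalso; rw [h] at hν₁neg; linarith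
      · exfalso
        have := hmono hν₂Ioo hν₁Ioo h
        simp only [] at this
        linarith
    have hcont := emri_cont m δ a hδmono hδpos hδtop hsum hν₁Ioo.1 hν₂Ioo.2 hlt.le
    obtain ⟨ν₀, hν₀mem, hν₀⟩ := intermediate_value_Icc hlt.le hcont
      ⟨hν₁neg.le, hν₂pos.le⟩
    have hν₀Ioo : ν₀ ∈ Ioo (δ j) (δ (j + 1)) :=
      ⟨lt_of_lt_of_le hν₁Ioo.1 hν₀mem.1, lt_of_le_of_lt hν₀mem.2 hν₂Ioo.2⟩
    refine ⟨ν₀, ⟨hν₀Ioo, hν₀⟩, ?_⟩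
    intro y hy
    exact hmono.injOn hy.1 hν₀Ioo (hy.2.trans hν₀.symm)
  · intro ν hν j hj
    refine ⟨?_, (hν j).1.1⟩
    have h := (hν (j - 1)).1.2
    rwa [Nat.sub_add_cancel hj] at h
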